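/- Let 1 ≤ p < ∞ and let z = (z_j)_{j≥1} be an element of ℓ^p (complex p-summable sequences) such that |z_{j₀}| > 1 for some index j₀. Then there exists a natural number k with k ≥ p such that the elementary symmetric-group-invariant polynomial F_k(x) = ∑_{j=1}^∞ x_j^k separates z from the closed unit ball of ℓ^p; that is, the series ∑_j z_j^k converges absolutely, |∑_{j=1}^∞ z_j^k| > 1, and |∑_{j=1}^∞ x_j^k| ≤ 1 for every x ∈ ℓ^p with ‖x‖_p ≤ 1. -/

import Mathlib

open scoped ENNReal


lemma pow_sub_one_norm_le (w : ℂ) (hw : ‖w‖ ≤ 1) (t : ℕ) :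
    ‖w ^ t - 1‖ ≤ t * ‖w - 1‖ := by
  induction t with
  | zero => simp
  | succ t ih =>
    have h : w ^ (t + 1) - 1 = w ^ t * (w - 1) + (w ^ t - 1) := by ring
    rw [h]
    calc ‖w ^ t * (w - 1) + (w ^ t - 1)‖ ≤ ‖w ^ t * (w - 1)‖ + ‖w ^ t - 1‖ := norm_add_le _ _
      _ ≤ 1 * ‖w - 1‖ + t * ‖w - 1‖ := by
          gcongr
          rw [norm_mul]
          gcongr
          calc ‖w ^ t‖ = ‖w‖ ^ t := norm_pow _ _
            _ ≤ 1 := pow_le_one₀ (norm_nonneg _) hw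
      _ = (t + 1 : ℕ) * ‖w - 1‖ := by push_cast; ring

lemma rpow_bound {a b q k : ℝ} (ha : 0 ≤ a) (hab : a ≤ b) (hq : 0 < q) (hqk : q ≤ k) :
    a ^ k ≤ a ^ q * b ^ (k - q) := by
  have h1 : a ^ k = a ^ q * a ^ (k - q) := by
    rw [← Real.rpow_add' ha (by ring_nf; linarith)]
    ring_nf
  rw [h1]
  have : a ^ (k - q) ≤ b ^ (k - q) := Real.rpow_le_rpow ha hab (by linarith)
  have h2 : 0 ≤ a ^ q := Real.rpow_nonneg ha _
  nlinarith

lemma summ_help {y : ℕ → ℂ} {q : ℝ} (hq : 0 < q) (hsum : Summable fun j => ‖y j‖ ^ q)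
    {b : ℝ} (hb : ∀ j, ‖y j‖ ≤ b) {k : ℕ} (hk : q ≤ (k : ℝ)) :
    Summable (fun j : ℕ => ‖(y j) ^ k‖) ∧
      ∑' j : ℕ, ‖(y j) ^ k‖ ≤ (∑' j : ℕ, ‖y j‖ ^ q) * b ^ ((k : ℝ) - q) := by
  have key : ∀ j, ‖(y j) ^ k‖ ≤ ‖y j‖ ^ q * b ^ ((k : ℝ) - q) := fun j => by
    rw [norm_pow, ← Real.rpow_natCast (‖y j‖) k]
    exact rpow_bound (norm_nonneg _) (hb j) hq hk
  have hsum2 : Summable fun j => ‖y j‖ ^ q * b ^ ((k : ℝ) - q) := hsum.mul_right _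
  refine ⟨Summable.of_nonneg_of_le (fun j => norm_nonneg _) key hsum2, ?_⟩
  calc ∑' j : ℕ, ‖(y j) ^ k‖ ≤ ∑' j : ℕ, ‖y j‖ ^ q * b ^ ((k : ℝ) - q) :=
        Summable.tsum_le_tsum key (Summable.of_nonneg_of_le (fun j => norm_nonneg _) key hsum2) hsum2
    _ = _ := tsum_mul_right


lemma single_recur {ε : ℝ} (hε : 0 < ε) : ∃ T : ℕ, 1 ≤ T ∧ ∀ w : ℂ, ‖w‖ = 1 →
    ∃ t : ℕ, 1 ≤ t ∧ t ≤ T ∧ ‖w ^ t - 1‖ ≤ ε := by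
  obtain ⟨m₀, hm₀⟩ := exists_nat_ge (2 / ε)
  set m := m₀ + 1 with hmdef
  have hmpos : (0 : ℝ) < m := by positivity
  have hmε : 2 / (m : ℝ) ≤ ε := by
    rw [div_le_iff₀ hmpos]
    have h1 : 2 / ε ≤ (m : ℝ) := by
      push_cast [hmdef]; linarith
    calc (2 : ℝ) = (2 / ε) * ε := by field_simp
      _ ≤ (m : ℝ) * ε := by nlinarith
      _ = ε * m := by ring
  refine ⟨(2 * m + 1) ^ 2, Nat.one_le_iff_ne_zero.mpr (by positivity), fun w hw => ?_⟩
  -- grid map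
  set g : ℕ → ℤ × ℤ := fun k => (⌊(w ^ k).re * m⌋, ⌊(w ^ k).im * m⌋) with hg
  have hnormk : ∀ k : ℕ, ‖w ^ k‖ = 1 := fun k => by rw [norm_pow, hw, one_pow]
  have habs : ∀ k : ℕ, |(w ^ k).re| ≤ 1 ∧ |(w ^ k).im| ≤ 1 := fun k => by
    constructor
    · calc |(w ^ k).re| ≤ ‖w ^ k‖ := Complex.abs_re_le_norm _
        _ = 1 := hnormk k
    · calc |(w ^ k).im| ≤ ‖w ^ k‖ := Complex.abs_im_le_norm _
        _ = 1 := hnormk k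
  have hmaps : ∀ k ∈ Finset.range ((2 * m + 1) ^ 2 + 1),
      g k ∈ (Finset.Icc (-(m : ℤ)) m) ×ˢ (Finset.Icc (-(m : ℤ)) m) := by
    intro k _
    have h := habs k
    rw [Finset.mem_product, Finset.mem_Icc, Finset.mem_Icc]
    have hre : -(1:ℝ) ≤ (w ^ k).re ∧ (w ^ k).re ≤ 1 := abs_le.mp h.1
    have him : -(1:ℝ) ≤ (w ^ k).im ∧ (w ^ k).im ≤ 1 := abs_le.mp h.2
    refine ⟨⟨?_, ?_⟩, ?_, ?_⟩
    · rw [Int.le_floor]; push_cast; nlinarith [hre.1]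
    · have h3 : ((w ^ k).re * m : ℝ) ≤ ((m : ℤ) : ℝ) := by push_cast; nlinarith [hre.2]
      simpa using Int.floor_le_floor h3
    · rw [Int.le_floor]; push_cast; nlinarith [him.1]
    · have h3 : ((w ^ k).im * m : ℝ) ≤ ((m : ℤ) : ℝ) := by push_cast; nlinarith [him.2]
      simpa using Int.floor_le_floor h3
  have hcard : ((Finset.Icc (-(m : ℤ)) m) ×ˢ (Finset.Icc (-(m : ℤ)) m)).card
      < (Finset.range ((2 * m + 1) ^ 2 + 1)).card := by
    rw [Finset.card_product, Finset.card_range, Int.card_Icc]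
    have : ((m : ℤ) + 1 - -(m : ℤ)).toNat = 2 * m + 1 := by omega
    rw [this]; ring_nf; omega
  obtain ⟨k₁, hk₁, k₂, hk₂, hne, heq⟩ :=
    Finset.exists_ne_map_eq_of_card_lt_of_maps_to hcard hmaps
  -- wlog k₁ < k₂
  wlog hlt : k₁ < k₂ generalizing k₁ k₂
  · exact this k₂ hk₂ k₁ hk₁ hne.symm heq.symm (by omega)
  have hclose : ‖w ^ k₂ - w ^ k₁‖ ≤ 2 / m := by
    have h1 : |(w ^ k₂).re - (w ^ k₁).re| < 1 / m := by
      have h4 := Int.abs_sub_lt_one_of_floor_eq_floor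
        (congrArg Prod.fst heq : ⌊(w ^ k₁).re * m⌋ = ⌊(w ^ k₂).re * m⌋)
      rw [lt_div_iff₀ hmpos]
      calc |(w ^ k₂).re - (w ^ k₁).re| * m = |(w ^ k₂).re * m - (w ^ k₁).re * m| := by
            rw [← sub_mul, abs_mul, abs_of_pos hmpos]
        _ = |(w ^ k₁).re * m - (w ^ k₂).re * m| := abs_sub_comm _ _
        _ < 1 := h4
    have h2 : |(w ^ k₂).im - (w ^ k₁).im| < 1 / m := by
      have h4 := Int.abs_sub_lt_one_of_floor_eq_floor
        (congrArg Prod.snd heq : ⌊(w ^ k₁).im * m⌋ = ⌊(w ^ k₂).im * m⌋)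
      rw [lt_div_iff₀ hmpos]
      calc |(w ^ k₂).im - (w ^ k₁).im| * m = |(w ^ k₂).im * m - (w ^ k₁).im * m| := by
            rw [← sub_mul, abs_mul, abs_of_pos hmpos]
        _ = |(w ^ k₁).im * m - (w ^ k₂).im * m| := abs_sub_comm _ _
        _ < 1 := h4
    calc ‖w ^ k₂ - w ^ k₁‖ ≤ |(w ^ k₂ - w ^ k₁).re| + |(w ^ k₂ - w ^ k₁).im| :=
          Complex.norm_le_abs_re_add_abs_im _
      _ = |(w ^ k₂).re - (w ^ k₁).re| + |(w ^ k₂).im - (w ^ k₁).im| := by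
          simp [Complex.sub_re, Complex.sub_im]
      _ ≤ 1 / m + 1 / m := by linarith
      _ = 2 / m := by ring
  refine ⟨k₂ - k₁, by omega, ?_, ?_⟩
  · have : k₂ ≤ (2 * m + 1) ^ 2 := by
      have := Finset.mem_range.mp hk₂; omega
    omega
  · have hfac : w ^ k₁ * (w ^ (k₂ - k₁) - 1) = w ^ k₂ - w ^ k₁ := by
      rw [mul_sub, ← pow_add, mul_one]
      congr 2
      omega
    have : ‖w ^ k₁‖ * ‖w ^ (k₂ - k₁) - 1‖ = ‖w ^ k₂ - w ^ k₁‖ := by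
      rw [← norm_mul, hfac]
    rw [hnormk k₁, one_mul] at this
    rw [this]
    exact hclose.trans hmε



lemma multi_recur (S : Finset ℕ) (w : ℕ → ℂ) :
    ∀ ε : ℝ, 0 < ε → ∀ N : ℕ, (∀ j ∈ S, ‖w j‖ = 1) →
      ∃ d : ℕ, N ≤ d ∧ ∀ j ∈ S, ‖w j ^ d - 1‖ ≤ ε := by
  induction S using Finset.induction_on with
  | empty => intro ε hε N _; exact ⟨N, le_rfl, by simp⟩
  | @insert a S' ha ih =>
    intro ε hε N hw
    obtain ⟨T, hT1, hsingle⟩ := single_recur hε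
    have hTpos : (0 : ℝ) < T := by exact_mod_cast hT1
    obtain ⟨d', hd'N, hd'⟩ := ih (ε / T) (by positivity) N
      (fun j hj => hw j (Finset.mem_insert_of_mem hj))
    have hwa : ‖(w a) ^ d'‖ = 1 := by
      rw [norm_pow, hw a (Finset.mem_insert_self a S'), one_pow]
    obtain ⟨t, ht1, htT, hta⟩ := hsingle ((w a) ^ d') hwa
    refine ⟨d' * t, le_trans hd'N (Nat.le_mul_of_pos_right d' (by omega)), ?_⟩
    intro j hj
    rcases Finset.mem_insert.mp hj with rfl | hj'
    · rw [pow_mul]; exact hta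
    · have hwj : ‖(w j) ^ d'‖ ≤ 1 := by
        rw [norm_pow, hw j (Finset.mem_insert_of_mem hj'), one_pow]
      calc ‖w j ^ (d' * t) - 1‖ = ‖((w j) ^ d') ^ t - 1‖ := by rw [pow_mul]
        _ ≤ t * ‖(w j) ^ d' - 1‖ := pow_sub_one_norm_le _ hwj t
        _ ≤ T * (ε / T) := by
            have := hd' j hj'
            have ht : (t : ℝ) ≤ T := by exact_mod_cast htT
            have hn : (0:ℝ) ≤ ‖(w j) ^ d' - 1‖ := norm_nonneg _
            nlinarith [this]
        _ = ε := by field_simp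



/-- Let `1 ≤ p < ∞` and `z ∈ ℓ^p` (complex) with `|z_{j₀}| > 1` for some
index `j₀`. Then there is a natural number `k ≥ p` such that the elementary
symmetric-group-invariant polynomial `F_k(x) = ∑_j x_j^k` separates `z` from the closed unit
ball of `ℓ^p`: the series `∑_j z_j^k` converges absolutely, `|∑_j z_j^k| > 1`, and
`|∑_j x_j^k| ≤ 1` (the series again converging absolutely) for every `x` with `‖x‖ ≤ 1`. -/
theorem statement11 (p : ℝ≥0∞) [Fact (1 ≤ p)] (hp : p ≠ ∞)
    (z : lp (fun _ : ℕ => ℂ) p) (j₀ : ℕ) (hz : 1 < ‖z j₀‖) :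
    ∃ k : ℕ, p ≤ (k : ℝ≥0∞) ∧
      Summable (fun j : ℕ => ‖(z j) ^ k‖) ∧
      1 < ‖∑' j : ℕ, (z j) ^ k‖ ∧
      ∀ x : lp (fun _ : ℕ => ℂ) p, ‖x‖ ≤ 1 →
        Summable (fun j : ℕ => ‖(x j) ^ k‖) ∧ ‖∑' j : ℕ, (x j) ^ k‖ ≤ 1 := by
  have hp1 : (1 : ℝ≥0∞) ≤ p := Fact.out
  set q := p.toReal with hqdef
  have hq1 : 1 ≤ q := by
    rw [hqdef, ← ENNReal.toReal_one]
    exact ENNReal.toReal_mono hp hp1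
  have hq0 : 0 < q := lt_of_lt_of_le one_pos hq1
  have hzsum : Summable fun j : ℕ => ‖z j‖ ^ q := (lp.memℓp z).summable hq0
  -- the finite set of large coordinates
  have hfin : {j : ℕ | 1 < ‖z j‖}.Finite := by
    have h := hzsum.tendsto_cofinite_zero
    have h2 : ∀ᶠ j in Filter.cofinite, ‖z j‖ ^ q < 1 :=
      h.eventually_lt_const one_pos
    rw [Filter.eventually_cofinite] at h2
    refine h2.subset fun j hj => ?_
    have hj' : 1 < ‖z j‖ := hj
    have : (1 : ℝ) ^ q ≤ ‖z j‖ ^ q := Real.rpow_le_rpow zero_le_one hj'.le hq0.le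
    rw [Real.one_rpow] at this
    simp only [Set.mem_setOf_eq, not_lt]
    exact this
  set T := hfin.toFinset with hTdef
  have hj₀T : j₀ ∈ T := by
    rw [hTdef, Set.Finite.mem_toFinset]; exact hz
  have hTne : T.Nonempty := ⟨j₀, hj₀T⟩
  set M := T.sup' hTne fun j => ‖z j‖ with hMdef
  have hM1 : 1 < M :=
    lt_of_lt_of_le hz (Finset.le_sup' (f := fun j => ‖z j‖) hj₀T)
  have hM0 : 0 < M := lt_trans one_pos hM1
  have hMle : ∀ j, ‖z j‖ ≤ M := by
    intro j
    by_cases h : j ∈ T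
    · exact Finset.le_sup' (f := fun j => ‖z j‖) h
    · have : ¬ 1 < ‖z j‖ := by simpa [hTdef] using h
      linarith
  set S := T.filter (fun j => ‖z j‖ = M) with hSdef
  have hSne : S.Nonempty := by
    obtain ⟨j, hj, hje⟩ := Finset.exists_mem_eq_sup' hTne fun j => ‖z j‖
    exact ⟨j, Finset.mem_filter.mpr ⟨hj, hje.symm⟩⟩
  have hScard : 1 ≤ (S.card : ℝ) := by exact_mod_cast Finset.card_pos.mpr hSne
  -- choice of r
  obtain ⟨r, hr1, hrM, hrle⟩ : ∃ r : ℝ, 1 ≤ r ∧ r < M ∧ ∀ j ∉ S, ‖z j‖ ≤ r := by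
    by_cases h : (T \ S).Nonempty
    · refine ⟨max 1 ((T \ S).sup' h fun j => ‖z j‖), le_max_left _ _, ?_, ?_⟩
      · rw [max_lt_iff]
        refine ⟨hM1, ?_⟩
        rw [Finset.sup'_lt_iff]
        intro j hj
        rcases Finset.mem_sdiff.mp hj with ⟨hjT, hjS⟩
        exact lt_of_le_of_ne (hMle j) fun he => hjS (Finset.mem_filter.mpr ⟨hjT, he⟩)
      · intro j hj
        by_cases hjT : j ∈ T
        · exact le_max_of_le_right (Finset.le_sup' (f := fun j => ‖z j‖) (Finset.mem_sdiff.mpr ⟨hjT, hj⟩))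
        · have : ¬ 1 < ‖z j‖ := by simpa [hTdef] using hjT
          exact le_max_of_le_left (by linarith)
    · refine ⟨1, le_rfl, hM1, fun j hj => ?_⟩
      by_cases hjT : j ∈ T
      · exact absurd ⟨j, Finset.mem_sdiff.mpr ⟨hjT, hj⟩⟩ h
      · have : ¬ 1 < ‖z j‖ := by simpa [hTdef] using hjT
        linarith
  have hr0 : 0 < r := lt_of_lt_of_le one_pos hr1
  set C := ∑' j : ℕ, ‖z j‖ ^ q with hCdef
  have hC0 : 0 ≤ C := tsum_nonneg fun j => Real.rpow_nonneg (norm_nonneg _) _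
  -- choose N
  have hlim1 : Filter.Tendsto (fun d : ℕ => C * (r / M) ^ d) Filter.atTop (nhds 0) := by
    have h0 : Filter.Tendsto (fun d : ℕ => (r / M) ^ d) Filter.atTop (nhds 0) :=
      tendsto_pow_atTop_nhds_zero_of_lt_one (by positivity) ((div_lt_one hM0).mpr hrM)
    simpa using h0.const_mul C
  have hlim2 : Filter.Tendsto (fun d : ℕ => M ^ d) Filter.atTop Filter.atTop :=
    tendsto_pow_atTop_atTop_of_one_lt hM1
  have hev : ∀ᶠ d in Filter.atTop, C * (r / M) ^ d ≤ 1 / 4 ∧ (8 : ℝ) ≤ M ^ d := by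
    filter_upwards [hlim1.eventually_le_const (by norm_num : (0:ℝ) < 1/4),
      hlim2.eventually_ge_atTop 8] with d h1 h2
    exact ⟨h1, h2⟩
  obtain ⟨N₀, hN₀⟩ := Filter.eventually_atTop.mp hev
  set k₀ := ⌈q⌉₊ with hk₀def
  set N := max N₀ k₀ with hNdef
  -- pigeonhole
  set w : ℕ → ℂ := fun j => z j / (M : ℂ) with hwdef
  have hwnorm : ∀ j ∈ S, ‖w j‖ = 1 := by
    intro j hj
    have hjM : ‖z j‖ = M := (Finset.mem_filter.mp hj).2
    rw [hwdef]
    simp only [norm_div, Complex.norm_real, Real.norm_eq_abs, abs_of_pos hM0, hjM]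
    field_simp
  obtain ⟨d, hdN, hd⟩ := multi_recur S w (1/2) (by norm_num) N hwnorm
  have hdk₀ : k₀ ≤ d := le_trans (le_max_right _ _) hdN
  have hqd : q ≤ (d : ℝ) := le_trans (Nat.le_ceil q) (by exact_mod_cast hdk₀)
  refine ⟨d, ?_, ?_, ?_, ?_⟩
  · -- p ≤ d
    rw [← ENNReal.ofReal_toReal hp, ← hqdef]
    calc ENNReal.ofReal q ≤ ENNReal.ofReal (d : ℝ) := ENNReal.ofReal_le_ofReal hqd
      _ = (d : ℝ≥0∞) := ENNReal.ofReal_natCast d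
  · exact (summ_help hq0 hzsum hMle hqd).1
  · -- main lower bound
    obtain ⟨hzsumd, _⟩ := summ_help hq0 hzsum hMle hqd
    have hsumz : Summable fun j : ℕ => (z j) ^ d := Summable.of_norm hzsumd
    have hsplit := Summable.sum_add_tsum_compl (s := S) (f := fun j : ℕ => (z j) ^ d) hsumz
    -- head
    have hzw : ∀ j ∈ S, (z j) ^ d = (M : ℂ) ^ d * (w j) ^ d := by
      intro j hj
      rw [← mul_pow]
      congr 1
      rw [hwdef]
      have : (M : ℂ) ≠ 0 := by exact_mod_cast hM0.ne'
      field_simp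
    have hwsum : (1 : ℝ) / 2 ≤ ‖∑ j ∈ S, (w j) ^ d‖ := by
      have expand : ∑ j ∈ S, (w j) ^ d = (S.card : ℂ) + ∑ j ∈ S, ((w j) ^ d - 1) := by
        rw [Finset.sum_sub_distrib, Finset.sum_const, nsmul_eq_mul, mul_one]
        ring
      have herr : ‖∑ j ∈ S, ((w j) ^ d - 1)‖ ≤ (S.card : ℝ) * (1 / 2) := by
        calc ‖∑ j ∈ S, ((w j) ^ d - 1)‖ ≤ ∑ j ∈ S, ‖(w j) ^ d - 1‖ := norm_sum_le _ _
          _ ≤ ∑ _j ∈ S, (1 / 2 : ℝ) := Finset.sum_le_sum fun j hj => hd j hj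
          _ = (S.card : ℝ) * (1 / 2) := by rw [Finset.sum_const, nsmul_eq_mul]
      have hnc : ‖(S.card : ℂ)‖ = (S.card : ℝ) := by
        simp
      have htri : ‖(S.card : ℂ)‖ - ‖∑ j ∈ S, ((w j) ^ d - 1)‖ ≤ ‖∑ j ∈ S, (w j) ^ d‖ := by
        rw [expand]
        have := norm_add_le ((S.card : ℂ) + ∑ j ∈ S, ((w j) ^ d - 1))
          (-(∑ j ∈ S, ((w j) ^ d - 1)))
        simp only [add_neg_cancel_right, norm_neg] at this
        linarith
      rw [hnc] at htri
      linarith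
    have hhead : M ^ d * (1 / 2) ≤ ‖∑ j ∈ S, (z j) ^ d‖ := by
      rw [Finset.sum_congr rfl hzw, ← Finset.mul_sum, norm_mul, norm_pow]
      have : ‖(M : ℂ)‖ = M := by
        rw [Complex.norm_real, Real.norm_eq_abs, abs_of_pos hM0]
      rw [this]
      have hMd : (0 : ℝ) < M ^ d := by positivity
      nlinarith [hwsum]
    -- tail
    have htail : ‖∑' j : ↑(↑S : Set ℕ)ᶜ, (z j) ^ d‖ ≤ C * r ^ d := by
      have hsub : Summable fun j : ↑(↑S : Set ℕ)ᶜ => ‖(z (j : ℕ)) ^ d‖ :=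
        hzsumd.subtype _
      have hsubq : Summable fun j : ↑(↑S : Set ℕ)ᶜ => ‖z (j : ℕ)‖ ^ q :=
        hzsum.subtype _
      calc ‖∑' j : ↑(↑S : Set ℕ)ᶜ, (z j) ^ d‖
          ≤ ∑' j : ↑(↑S : Set ℕ)ᶜ, ‖(z (j : ℕ)) ^ d‖ := norm_tsum_le_tsum_norm hsub
        _ ≤ ∑' j : ↑(↑S : Set ℕ)ᶜ, ‖z (j : ℕ)‖ ^ q * r ^ ((d : ℝ) - q) := by
            refine Summable.tsum_le_tsum (fun j => ?_) hsub (hsubq.mul_right _)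
            rw [norm_pow, ← Real.rpow_natCast (‖z (j : ℕ)‖) d]
            exact rpow_bound (norm_nonneg _) (hrle _ fun h => j.2 (Finset.mem_coe.mpr h)) hq0 hqd
        _ = (∑' j : ↑(↑S : Set ℕ)ᶜ, ‖z (j : ℕ)‖ ^ q) * r ^ ((d : ℝ) - q) := tsum_mul_right
        _ ≤ C * r ^ ((d : ℝ) - q) :=
            mul_le_mul_of_nonneg_right
              (Summable.tsum_subtype_le (fun j : ℕ => ‖z j‖ ^ q) _
                (fun j => Real.rpow_nonneg (norm_nonneg _) _) hzsum)
              (Real.rpow_nonneg hr0.le _)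
        _ ≤ C * r ^ (d : ℝ) :=
            mul_le_mul_of_nonneg_left
              (Real.rpow_le_rpow_of_exponent_le hr1 (by linarith)) hC0
        _ = C * r ^ d := by rw [Real.rpow_natCast]
    -- combine
    obtain ⟨h14, h8⟩ := hN₀ d (le_trans (le_max_left _ _) hdN)
    have hMd0 : (0 : ℝ) < M ^ d := by positivity
    have hrM_eq : C * r ^ d = C * (r / M) ^ d * M ^ d := by
      rw [div_pow, mul_assoc, div_mul_cancel₀]
      exact hMd0.ne'
    have hfinal : ‖∑ j ∈ S, (z j) ^ d‖ - ‖∑' j : ↑(↑S : Set ℕ)ᶜ, (z j) ^ d‖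
        ≤ ‖∑' j : ℕ, (z j) ^ d‖ := by
      rw [← hsplit]
      have := norm_add_le ((∑ j ∈ S, (z j) ^ d) + ∑' j : ↑(↑S : Set ℕ)ᶜ, (z j) ^ d)
        (-(∑' j : ↑(↑S : Set ℕ)ᶜ, (z j) ^ d))
      simp only [add_neg_cancel_right, norm_neg] at this
      linarith
    have hCr : C * r ^ d ≤ 1 / 4 * M ^ d := by
      rw [hrM_eq]
      nlinarith [hMd0]
    nlinarith [hfinal, hhead, htail, hCr, h8]
  · -- ball
    intro x hx
    have hxsum : Summable fun j : ℕ => ‖x j‖ ^ q := (lp.memℓp x).summable hq0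
    have hp0 : p ≠ 0 := by
      intro h; rw [h] at hp1; exact absurd hp1 (by simp)
    have hxle : ∀ j, ‖x j‖ ≤ 1 := fun j => (lp.norm_apply_le_norm hp0 x j).trans hx
    obtain ⟨hs', hts'⟩ := summ_help hq0 hxsum hxle hqd
    refine ⟨hs', ?_⟩
    calc ‖∑' j : ℕ, (x j) ^ d‖ ≤ ∑' j : ℕ, ‖(x j) ^ d‖ := norm_tsum_le_tsum_norm hs'
      _ ≤ (∑' j : ℕ, ‖x j‖ ^ q) * (1 : ℝ) ^ ((d : ℝ) - q) := hts'
      _ = ∑' j : ℕ, ‖x j‖ ^ q := by rw [Real.one_rpow, mul_one]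
      _ ≤ 1 := by
          have hnx := lp.norm_rpow_eq_tsum hq0 x
          rw [← hnx]
          exact Real.rpow_le_one (norm_nonneg _) hx hq0.le
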